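/- Let A = ℂ[x,y]/M³, where M = (x,y) is the ideal generated by x and y in the polynomial ring ℂ[x,y] (so M³ is the ideal generated by all monomials of degree 3). Let J₁, J₂, J₃ be the ideals of A generated by the images of x, y and x − y respectively. Then J₁ ∩ J₂ ∩ J₃ = {0} (so (J₁, J₂, J₃) is a covering of A), but this covering is not complete: the elements b₁ = x − y mod M³, b₂ = x − y mod M³, b₃ = x mod M³ satisfy b_i − b_j ∈ J_i + J_j for all i, j, yet there is no b ∈ A with b − b_i ∈ J_i for all i ∈ {1, 2, 3}. -/

import Mathlib

open MvPolynomial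

/-- The polynomial ring ℂ[x,y]. -/
noncomputable abbrev PolyXY : Type := MvPolynomial (Fin 2) ℂ

/-- The maximal ideal M = (x, y) of ℂ[x,y]. -/
noncomputable def Mxy : Ideal PolyXY := Ideal.span {X 0, X 1}

/-- The algebra A = ℂ[x,y]/M³. -/
noncomputable abbrev Acut : Type := PolyXY ⧸ (Mxy ^ 3)

/-- The image of x in A. -/
noncomputable def xA : Acut := Ideal.Quotient.mk (Mxy ^ 3) (X 0)

/-- The image of y in A. -/
noncomputable def yA : Acut := Ideal.Quotient.mk (Mxy ^ 3) (X 1)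

/-- The ideals J₁ = (x), J₂ = (y), J₃ = (x-y) of A. -/
noncomputable def Jex : Fin 3 → Ideal Acut :=
  ![Ideal.span {xA}, Ideal.span {yA}, Ideal.span {xA - yA}]

/-- The elements b₁ = x - y, b₂ = x - y, b₃ = x of A. -/
noncomputable def bex : Fin 3 → Acut := ![xA - yA, xA - yA, xA]

/-! ### Auxiliary lemmas -/

lemma mulX_zero (m : Fin 2 →₀ ℕ) (s : Fin 2) (p : PolyXY) (h : m s = 0) :
    coeff m (p * X s) = 0 := by
  classical
  rw [coeff_mul_X', if_neg]
  simp [Finsupp.mem_support_iff, h]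

lemma lowM {p : PolyXY} (hp : p ∈ Mxy) :
    ∀ d : Fin 2 →₀ ℕ, d 0 + d 1 < 1 → coeff d p = 0 := by
  obtain ⟨a, b, rfl⟩ := Ideal.mem_span_pair.mp hp
  intro d hd
  have h0 : d 0 = 0 := by omega
  have h1 : d 1 = 0 := by omega
  rw [coeff_add, mulX_zero _ _ _ h0, mulX_zero _ _ _ h1, add_zero]

lemma low_mul {m n : ℕ} {p q : PolyXY}
    (hp : ∀ d : Fin 2 →₀ ℕ, d 0 + d 1 < m → coeff d p = 0)
    (hq : ∀ d : Fin 2 →₀ ℕ, d 0 + d 1 < n → coeff d q = 0) :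
    ∀ d : Fin 2 →₀ ℕ, d 0 + d 1 < m + n → coeff d (p * q) = 0 := by
  intro d hd
  rw [coeff_mul]
  refine Finset.sum_eq_zero fun x hx => ?_
  have hxy := Finset.HasAntidiagonal.mem_antidiagonal.mp hx
  have h0 : x.1 0 + x.2 0 = d 0 := by rw [← hxy, Finsupp.add_apply]
  have h1 : x.1 1 + x.2 1 = d 1 := by rw [← hxy, Finsupp.add_apply]
  rcases (by omega : x.1 0 + x.1 1 < m ∨ x.2 0 + x.2 1 < n) with h | h
  · rw [hp _ h, zero_mul]
  · rw [hq _ h, mul_zero]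

lemma low_of_mem {p : PolyXY} (hp : p ∈ Mxy ^ 3) :
    ∀ d : Fin 2 →₀ ℕ, d 0 + d 1 < 3 → coeff d p = 0 := by
  have h2 : ∀ q ∈ Mxy * Mxy, ∀ d : Fin 2 →₀ ℕ, d 0 + d 1 < 2 → coeff d q = 0 := by
    intro q hq
    refine Submodule.mul_induction_on hq (fun a ha b hb => ?_) (fun x y hx hy d hd => ?_)
    · have := low_mul (lowM ha) (lowM hb); simpa using this
    · rw [coeff_add, hx d hd, hy d hd, add_zero]
  have h3 : Mxy ^ 3 = Mxy * Mxy * Mxy := by ring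
  rw [h3] at hp
  exact Submodule.mul_induction_on hp
    (fun a ha b hb => by have := low_mul (h2 a ha) (lowM hb); simpa using this)
    (fun x y hx hy d hd => by rw [coeff_add, hx d hd, hy d hd, add_zero])

lemma X0_mem : (X 0 : PolyXY) ∈ Mxy := Ideal.subset_span (by simp)
lemma X1_mem : (X 1 : PolyXY) ∈ Mxy := Ideal.subset_span (by simp)

lemma mem_pow3_of_low {p : PolyXY}
    (h : ∀ d : Fin 2 →₀ ℕ, d 0 + d 1 < 3 → coeff d p = 0) : p ∈ Mxy ^ 3 := by
  rw [p.as_sum]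
  refine Ideal.sum_mem _ fun v hv => ?_
  have hv3 : 3 ≤ v 0 + v 1 := by
    by_contra hlt
    exact (mem_support_iff.mp hv) (h v (by omega))
  rw [monomial_eq]
  have hprod : (v.prod fun n e => (X n : PolyXY) ^ e) = X 0 ^ v 0 * X 1 ^ v 1 := by
    rw [Finsupp.prod_fintype]
    · exact Fin.prod_univ_two _
    · intro i; exact pow_zero _
  rw [hprod]
  refine Ideal.mul_mem_left _ _ ?_
  have : (X 0 : PolyXY) ^ v 0 * X 1 ^ v 1 ∈ Mxy ^ (v 0 + v 1) := by
    rw [pow_add]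
    exact Ideal.mul_mem_mul (Ideal.pow_mem_pow X0_mem _) (Ideal.pow_mem_pow X1_mem _)
  exact Ideal.pow_le_pow_right hv3 this

/-! Coefficient computations for products with `X`. -/

lemma mulX0_10 (p : PolyXY) : coeff (Finsupp.single 0 1) (p * X 0) = coeff 0 p := by
  simpa using coeff_mul_X 0 0 p

lemma mulX0_20 (p : PolyXY) :
    coeff (Finsupp.single 0 2) (p * X 0) = coeff (Finsupp.single 0 1) p := by
  have := coeff_mul_X (Finsupp.single (0 : Fin 2) 1) 0 p
  rwa [← Finsupp.single_add] at this

lemma mulX0_11 (p : PolyXY) :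
    coeff (Finsupp.single 0 1 + Finsupp.single 1 1) (p * X 0) = coeff (Finsupp.single 1 1) p := by
  have := coeff_mul_X (Finsupp.single (1 : Fin 2) 1) 0 p
  rwa [add_comm] at this

lemma mulX1_01 (p : PolyXY) : coeff (Finsupp.single 1 1) (p * X 1) = coeff 0 p := by
  simpa using coeff_mul_X 0 1 p

lemma mulX1_02 (p : PolyXY) :
    coeff (Finsupp.single 1 2) (p * X 1) = coeff (Finsupp.single 1 1) p := by
  have := coeff_mul_X (Finsupp.single (1 : Fin 2) 1) 1 p
  rwa [← Finsupp.single_add] at this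

lemma mulX1_11 (p : PolyXY) :
    coeff (Finsupp.single 0 1 + Finsupp.single 1 1) (p * X 1) = coeff (Finsupp.single 0 1) p :=
  coeff_mul_X (Finsupp.single (0 : Fin 2) 1) 1 p

lemma mulX0_at00 (p : PolyXY) : coeff 0 (p * X 0) = 0 := mulX_zero _ _ _ (by simp)
lemma mulX1_at00 (p : PolyXY) : coeff 0 (p * X 1) = 0 := mulX_zero _ _ _ (by simp)
lemma mulX0_at01 (p : PolyXY) : coeff (Finsupp.single 1 1) (p * X 0) = 0 :=
  mulX_zero _ _ _ (by simp)
lemma mulX0_at02 (p : PolyXY) : coeff (Finsupp.single 1 2) (p * X 0) = 0 :=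
  mulX_zero _ _ _ (by simp)
lemma mulX1_at10 (p : PolyXY) : coeff (Finsupp.single 0 1) (p * X 1) = 0 :=
  mulX_zero _ _ _ (by simp)
lemma mulX1_at20 (p : PolyXY) : coeff (Finsupp.single 0 2) (p * X 1) = 0 :=
  mulX_zero _ _ _ (by simp)

lemma cX00 : coeff (Finsupp.single 0 1) (X 0 : PolyXY) = 1 := coeff_X_same 0
lemma cX11 : coeff (Finsupp.single 1 1) (X 1 : PolyXY) = 1 := coeff_X_same 1
lemma cX01 : coeff (Finsupp.single 1 1) (X 0 : PolyXY) = 0 := by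
  rw [coeff_X']
  simp [Finsupp.single_eq_single_iff]
lemma cX10 : coeff (Finsupp.single 0 1) (X 1 : PolyXY) = 0 := by
  rw [coeff_X']
  simp [Finsupp.single_eq_single_iff]

lemma single_sum_lt (a b : ℕ) (h : a + b < 3) :
    (Finsupp.single (0 : Fin 2) a + Finsupp.single (1 : Fin 2) b) 0 +
      (Finsupp.single (0 : Fin 2) a + Finsupp.single (1 : Fin 2) b) 1 < 3 := by
  rw [Finsupp.add_apply, Finsupp.add_apply, Finsupp.single_eq_same, Finsupp.single_eq_same,
    Finsupp.single_eq_of_ne (by decide), Finsupp.single_eq_of_ne (by decide)]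
  omega

set_option maxHeartbeats 1000000 in
set_option synthInstance.maxHeartbeats 400000 in

/-- In A = ℂ[x,y]/M³ the ideals J₁ = (x), J₂ = (y), J₃ = (x-y) form a
covering which is not complete: the triple (x-y, x-y, x) is pairwise compatible but has
no simultaneous approximant modulo the three ideals. -/
theorem noncomplete_covering_example :
    (Jex 0 ⊓ Jex 1 ⊓ Jex 2 = ⊥) ∧
    (∀ i j, bex i - bex j ∈ Jex i + Jex j) ∧
    ¬ ∃ b : Acut, ∀ i, b - bex i ∈ Jex i := by
  have hJ0 : Jex 0 = Ideal.span {xA} := rfl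
  have hJ1 : Jex 1 = Ideal.span {yA} := rfl
  have hJ2 : Jex 2 = Ideal.span {xA - yA} := rfl
  have hx : Ideal.Quotient.mk (Mxy ^ 3) (X 0) = xA := rfl
  have hy : Ideal.Quotient.mk (Mxy ^ 3) (X 1) = yA := rfl
  refine ⟨?_, ?_, ?_⟩
  · -- the covering property
    rw [eq_bot_iff]
    intro a ha
    simp only [Submodule.mem_inf] at ha
    obtain ⟨⟨ha1, ha2⟩, ha3⟩ := ha
    rw [hJ0] at ha1; rw [hJ1] at ha2; rw [hJ2] at ha3
    obtain ⟨c1, hc1⟩ := Ideal.mem_span_singleton'.mp ha1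
    obtain ⟨c2, hc2⟩ := Ideal.mem_span_singleton'.mp ha2
    obtain ⟨c3, hc3⟩ := Ideal.mem_span_singleton'.mp ha3
    obtain ⟨q, rfl⟩ := Ideal.Quotient.mk_surjective c1
    obtain ⟨r, rfl⟩ := Ideal.Quotient.mk_surjective c2
    obtain ⟨s, rfl⟩ := Ideal.Quotient.mk_surjective c3
    have m1 : Ideal.Quotient.mk (Mxy ^ 3) (q * X 0) = a := by
      rw [map_mul, hx]; exact hc1
    have m2 : Ideal.Quotient.mk (Mxy ^ 3) (r * X 1) = a := by
      rw [map_mul, hy]; exact hc2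
    have m3 : Ideal.Quotient.mk (Mxy ^ 3) (s * (X 0 - X 1)) = a := by
      rw [map_mul, map_sub, hx, hy]; exact hc3
    have e1 : q * X 0 - r * X 1 ∈ Mxy ^ 3 :=
      Ideal.Quotient.eq.mp (m1.trans m2.symm)
    have e2 : q * X 0 - s * (X 0 - X 1) ∈ Mxy ^ 3 :=
      Ideal.Quotient.eq.mp (m1.trans m3.symm)
    rw [mul_sub] at e2
    have E1 := low_of_mem e1
    have E2 := low_of_mem e2
    -- extract scalar equations
    have A1 : coeff 0 q = 0 := by
      have h := E1 (Finsupp.single 0 1) (by simp)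
      rwa [coeff_sub, mulX0_10, mulX1_at10, sub_zero] at h
    have A2 : coeff (Finsupp.single 0 1) q = 0 := by
      have h := E1 (Finsupp.single 0 2) (by simp)
      rwa [coeff_sub, mulX0_20, mulX1_at20, sub_zero] at h
    have A4 : coeff (Finsupp.single 1 1) s = 0 := by
      have h := E2 (Finsupp.single 1 2) (by simp)
      rw [coeff_sub, coeff_sub, mulX0_at02, mulX0_at02, mulX1_02] at h
      linear_combination h
    have A5 : coeff (Finsupp.single 0 1) s = 0 := by
      have h := E2 (Finsupp.single 0 2) (by simp)
      rw [coeff_sub, coeff_sub, mulX0_20, mulX0_20, mulX1_at20, sub_zero, A2] at h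
      linear_combination -h
    have A3 : coeff (Finsupp.single 1 1) q = 0 := by
      have h := E2 (Finsupp.single 0 1 + Finsupp.single 1 1) (single_sum_lt 1 1 (by norm_num))
      rw [coeff_sub, coeff_sub, mulX0_11, mulX0_11, mulX1_11, A4, A5] at h
      linear_combination h
    rw [Submodule.mem_bot, ← m1, Ideal.Quotient.eq_zero_iff_mem]
    apply mem_pow3_of_low
    intro d hd
    have hrep : d = Finsupp.single 0 (d 0) + Finsupp.single 1 (d 1) := by
      ext i
      fin_cases i <;> simp [Finsupp.single_apply]
    have h6 : (d 0 = 0 ∧ d 1 = 0) ∨ (d 0 = 1 ∧ d 1 = 0) ∨ (d 0 = 0 ∧ d 1 = 1) ∨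
        (d 0 = 2 ∧ d 1 = 0) ∨ (d 0 = 1 ∧ d 1 = 1) ∨ (d 0 = 0 ∧ d 1 = 2) := by omega
    rcases h6 with ⟨h0, h1⟩ | ⟨h0, h1⟩ | ⟨h0, h1⟩ | ⟨h0, h1⟩ | ⟨h0, h1⟩ | ⟨h0, h1⟩ <;>
      rw [hrep, h0, h1]
    · rw [Finsupp.single_zero, Finsupp.single_zero, add_zero]; exact mulX0_at00 q
    · rw [Finsupp.single_zero, add_zero, mulX0_10]; exact A1
    · rw [Finsupp.single_zero, zero_add]; exact mulX0_at01 q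
    · rw [Finsupp.single_zero, add_zero, mulX0_20]; exact A2
    · rw [mulX0_11]; exact A3
    · rw [Finsupp.single_zero, zero_add]; exact mulX0_at02 q
  · -- pairwise compatibility
    have key : ∀ (u v : Acut) (I J : Ideal Acut), u ∈ I → v ∈ J → u + v ∈ I + J := by
      intro u v I J hu hv
      rw [Submodule.add_eq_sup, Submodule.mem_sup]
      exact ⟨u, hu, v, hv, rfl⟩
    intro i j
    fin_cases i <;> fin_cases j
    · show (xA - yA) - (xA - yA) ∈ Ideal.span {xA} + Ideal.span {xA}
      simp
    · show (xA - yA) - (xA - yA) ∈ Ideal.span {xA} + Ideal.span {yA}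
      simp
    · show (xA - yA) - xA ∈ Ideal.span {xA} + Ideal.span {xA - yA}
      rw [show (xA - yA) - xA = -xA + (xA - yA) by ring]
      exact key _ _ _ _ (neg_mem (Ideal.mem_span_singleton_self _))
        (Ideal.mem_span_singleton_self _)
    · show (xA - yA) - (xA - yA) ∈ Ideal.span {yA} + Ideal.span {xA}
      simp
    · show (xA - yA) - (xA - yA) ∈ Ideal.span {yA} + Ideal.span {yA}
      simp
    · show (xA - yA) - xA ∈ Ideal.span {yA} + Ideal.span {xA - yA}
      rw [show (xA - yA) - xA = -yA + 0 by ring]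
      exact key _ _ _ _ (neg_mem (Ideal.mem_span_singleton_self _)) (zero_mem _)
    · show xA - (xA - yA) ∈ Ideal.span {xA - yA} + Ideal.span {xA}
      rw [show xA - (xA - yA) = -(xA - yA) + xA by ring]
      exact key _ _ _ _ (neg_mem (Ideal.mem_span_singleton_self _))
        (Ideal.mem_span_singleton_self _)
    · show xA - (xA - yA) ∈ Ideal.span {xA - yA} + Ideal.span {yA}
      rw [show xA - (xA - yA) = 0 + yA by ring]
      exact key _ _ _ _ (zero_mem _) (Ideal.mem_span_singleton_self _)
    · show xA - xA ∈ Ideal.span {xA - yA} + Ideal.span {xA - yA}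
      rw [sub_self]; exact zero_mem _
  · -- incompleteness
    rintro ⟨b, hb⟩
    obtain ⟨p, hpb⟩ := Ideal.Quotient.mk_surjective b
    have hb0 := hb 0
    have hb1 := hb 1
    have hb2 := hb 2
    rw [show bex 0 = xA - yA from rfl, hJ0] at hb0
    rw [show bex 1 = xA - yA from rfl, hJ1] at hb1
    rw [show bex 2 = xA from rfl, hJ2] at hb2
    obtain ⟨c1, hc1⟩ := Ideal.mem_span_singleton'.mp hb0
    obtain ⟨c2, hc2⟩ := Ideal.mem_span_singleton'.mp hb1
    obtain ⟨c3, hc3⟩ := Ideal.mem_span_singleton'.mp hb2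
    obtain ⟨q, rfl⟩ := Ideal.Quotient.mk_surjective c1
    obtain ⟨r, rfl⟩ := Ideal.Quotient.mk_surjective c2
    obtain ⟨s, rfl⟩ := Ideal.Quotient.mk_surjective c3
    have e1 : p - (X 0 - X 1) - q * X 0 ∈ Mxy ^ 3 := by
      rw [← Ideal.Quotient.eq_zero_iff_mem]
      simp only [map_sub, map_mul]
      rw [hx, hy, hpb]
      exact sub_eq_zero_of_eq hc1.symm
    have e2 : p - (X 0 - X 1) - r * X 1 ∈ Mxy ^ 3 := by
      rw [← Ideal.Quotient.eq_zero_iff_mem]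
      simp only [map_sub, map_mul]
      rw [hx, hy, hpb]
      exact sub_eq_zero_of_eq hc2.symm
    have e3 : p - X 0 - s * (X 0 - X 1) ∈ Mxy ^ 3 := by
      rw [← Ideal.Quotient.eq_zero_iff_mem]
      simp only [map_sub, map_mul]
      rw [hx, hy, hpb]
      exact sub_eq_zero_of_eq hc3.symm
    rw [mul_sub] at e3
    have E1 := low_of_mem e1
    have E2 := low_of_mem e2
    have E3 := low_of_mem e3
    have B1 : coeff (Finsupp.single 1 1) p + 1 = 0 := by
      have h := E1 (Finsupp.single 1 1) (by simp)
      rw [coeff_sub, coeff_sub, coeff_sub, cX01, cX11, mulX0_at01] at h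
      linear_combination h
    have B2 : coeff (Finsupp.single 0 1) p - 1 = 0 := by
      have h := E2 (Finsupp.single 0 1) (by simp)
      rw [coeff_sub, coeff_sub, coeff_sub, cX00, cX10, mulX1_at10] at h
      linear_combination h
    have B3 : coeff (Finsupp.single 1 1) p + coeff 0 s = 0 := by
      have h := E3 (Finsupp.single 1 1) (by simp)
      rw [coeff_sub, coeff_sub, coeff_sub, cX01, mulX0_at01, mulX1_01] at h
      linear_combination h
    have B4 : coeff (Finsupp.single 0 1) p - 1 - coeff 0 s = 0 := by
      have h := E3 (Finsupp.single 0 1) (by simp)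
      rw [coeff_sub, coeff_sub, coeff_sub, cX00, mulX0_10, mulX1_at10, sub_zero] at h
      linear_combination h
    have : (1 : ℂ) = 0 := by linear_combination B1 + B2 - B3 - B4
    exact one_ne_zero this
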